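/- Exactly one of the following holds for a nonempty spectrahedron $\mathcal{F} = \{X \succeq 0 : \mathcal{A}(X) = b\}$: (i) $\mathcal{F}$ contains a positive definite matrix; (ii) there exists a nonzero $W = \mathcal{A}^*(y)$ with $W \succeq 0$ and $y^Tb = 0$. -/

import Mathlib

open Matrix

open scoped MatrixOrder in
lemma psd_exists_conjTranspose_mul {n : ℕ} {W : Matrix (Fin n) (Fin n) ℝ} (hW : W.PosSemidef) :
    ∃ B : Matrix (Fin n) (Fin n) ℝ, W = Bᴴ * B := by
  obtain ⟨B, hB⟩ := CStarAlgebra.nonneg_iff_eq_star_mul_self.mp hW.nonneg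
  exact ⟨B, hB⟩

attribute [local instance] Matrix.normedAddCommGroup

namespace FacialRed

variable {n : ℕ}

lemma star_pi (x : Fin n → ℝ) : star x = x := funext fun _ => rfl

lemma entry_abs_le (D : Matrix (Fin n) (Fin n) ℝ) (i j : Fin n) : |D i j| ≤ ‖D‖ := by
  simpa [Real.norm_eq_abs] using norm_entry_le_entrywise_sup_norm D (i := i) (j := j)

lemma coord_abs_le (v : Fin n → ℝ) (i : Fin n) : |v i| ≤ ‖v‖ := by
  simpa [Real.norm_eq_abs] using norm_le_pi_norm v i

lemma quad_bound (D : Matrix (Fin n) (Fin n) ℝ) (v : Fin n → ℝ) :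
    |v ⬝ᵥ D *ᵥ v| ≤ (n : ℝ) ^ 2 * ‖D‖ * ‖v‖ ^ 2 := by
  have hD : 0 ≤ ‖D‖ := norm_nonneg _
  have hv : 0 ≤ ‖v‖ := norm_nonneg _
  have h1 : ∀ i, |(D *ᵥ v) i| ≤ (n : ℝ) * ‖D‖ * ‖v‖ := by
    intro i
    calc |(D *ᵥ v) i| = |∑ j, D i j * v j| := rfl
      _ ≤ ∑ j, |D i j * v j| := Finset.abs_sum_le_sum_abs _ _
      _ ≤ ∑ _j : Fin n, ‖D‖ * ‖v‖ := Finset.sum_le_sum fun j _ => by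
          rw [abs_mul]
          exact mul_le_mul (entry_abs_le D i j) (coord_abs_le v j) (abs_nonneg _) hD
      _ = (n : ℝ) * ‖D‖ * ‖v‖ := by simp [Finset.sum_const, mul_assoc]
  calc |v ⬝ᵥ D *ᵥ v| = |∑ i, v i * (D *ᵥ v) i| := rfl
    _ ≤ ∑ i, |v i * (D *ᵥ v) i| := Finset.abs_sum_le_sum_abs _ _
    _ ≤ ∑ _i : Fin n, ‖v‖ * ((n : ℝ) * ‖D‖ * ‖v‖) := Finset.sum_le_sum fun i _ => by
        rw [abs_mul]
        exact mul_le_mul (coord_abs_le v i) (h1 i) (abs_nonneg _) hv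
    _ = (n : ℝ) ^ 2 * ‖D‖ * ‖v‖ ^ 2 := by simp [Finset.sum_const]; ring

lemma cont_quad (M : Matrix (Fin n) (Fin n) ℝ) :
    Continuous fun v : Fin n → ℝ => v ⬝ᵥ M *ᵥ v := by
  have h : (fun v : Fin n → ℝ => v ⬝ᵥ M *ᵥ v)
      = fun v => ∑ i, v i * ∑ j, M i j * v j := rfl
  rw [h]
  exact continuous_finset_sum _ fun i _ =>
    (continuous_apply i).mul
      (continuous_finset_sum _ fun j _ => continuous_const.mul (continuous_apply j))

lemma isOpen_posdefset (hn : 0 < n) :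
    IsOpen {M : Matrix (Fin n) (Fin n) ℝ | ∀ v, v ≠ 0 → 0 < v ⬝ᵥ M *ᵥ v} := by
  refine Metric.isOpen_iff.mpr ?_
  intro M₀ hM₀
  have : Nonempty (Fin n) := ⟨⟨0, hn⟩⟩
  have : Nontrivial (Fin n → ℝ) := inferInstance
  set S := Metric.sphere (0 : Fin n → ℝ) 1 with hS
  have hScomp : IsCompact S := isCompact_sphere _ _
  have hSne : S.Nonempty := NormedSpace.sphere_nonempty.mpr zero_le_one
  obtain ⟨v₀, hv₀S, hmin⟩ := hScomp.exists_isMinOn hSne (cont_quad M₀).continuousOn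
  set μ := v₀ ⬝ᵥ M₀ *ᵥ v₀ with hμ
  have hv₀ne : v₀ ≠ 0 := by
    intro h
    have h2 := Metric.mem_sphere.mp hv₀S
    rw [h] at h2; simp at h2
  have hμpos : 0 < μ := hM₀ v₀ hv₀ne
  have hlow : ∀ v : Fin n → ℝ, μ * ‖v‖ ^ 2 ≤ v ⬝ᵥ M₀ *ᵥ v := by
    intro v
    rcases eq_or_ne v 0 with rfl | hv
    · simp
    · have hnv : 0 < ‖v‖ := norm_pos_iff.mpr hv
      set w := ‖v‖⁻¹ • v with hw
      have hwS : w ∈ S := by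
        rw [hS, Metric.mem_sphere, dist_zero_right, hw, norm_smul]
        simp [abs_of_nonneg (inv_nonneg.mpr hnv.le), inv_mul_cancel₀ hnv.ne']
      have h1 : μ ≤ w ⬝ᵥ M₀ *ᵥ w := hmin hwS
      have h2 : w ⬝ᵥ M₀ *ᵥ w = ‖v‖⁻¹ * (‖v‖⁻¹ * (v ⬝ᵥ M₀ *ᵥ v)) := by
        rw [hw, smul_dotProduct, mulVec_smul, dotProduct_smul]
        simp [smul_eq_mul]
      rw [h2] at h1
      have h4 := mul_le_mul_of_nonneg_left h1 (sq_nonneg ‖v‖)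
      have h5 : ‖v‖ ^ 2 * (‖v‖⁻¹ * (‖v‖⁻¹ * (v ⬝ᵥ M₀ *ᵥ v))) = v ⬝ᵥ M₀ *ᵥ v := by
        field_simp
      rw [h5] at h4
      linarith [h4]
  refine ⟨μ / ((n : ℝ) ^ 2 + 1), by positivity, ?_⟩
  intro M hM v hv
  have hdist : ‖M - M₀‖ < μ / ((n : ℝ) ^ 2 + 1) := by
    rwa [Metric.mem_ball, dist_eq_norm] at hM
  have hq : v ⬝ᵥ M *ᵥ v = v ⬝ᵥ M₀ *ᵥ v + v ⬝ᵥ (M - M₀) *ᵥ v := by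
    rw [sub_mulVec, dotProduct_sub]; ring
  have hb := quad_bound (M - M₀) v
  have hvpos : 0 < ‖v‖ := norm_pos_iff.mpr hv
  have h2' : (n : ℝ) ^ 2 * ‖M - M₀‖ < μ := by
    have ha : (n : ℝ) ^ 2 * ‖M - M₀‖ ≤ ((n : ℝ) ^ 2 + 1) * ‖M - M₀‖ := by
      nlinarith [norm_nonneg (M - M₀)]
    have hbb : ((n : ℝ) ^ 2 + 1) * ‖M - M₀‖ < ((n : ℝ) ^ 2 + 1) * (μ / ((n : ℝ) ^ 2 + 1)) :=
      mul_lt_mul_of_pos_left hdist (by positivity)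
    have hc : ((n : ℝ) ^ 2 + 1) * (μ / ((n : ℝ) ^ 2 + 1)) = μ := by field_simp
    linarith
  have habs := neg_abs_le (v ⬝ᵥ (M - M₀) *ᵥ v)
  have hlowv := hlow v
  have hsq : 0 < ‖v‖ ^ 2 := by positivity
  nlinarith [mul_lt_mul_of_pos_right h2' hsq]

/-- The submodule of symmetric matrices. -/
def symSub (n : ℕ) : Submodule ℝ (Matrix (Fin n) (Fin n) ℝ) where
  carrier := {X | Xᵀ = X}
  add_mem' := fun {a b} ha hb => by
    simp only [Set.mem_setOf_eq] at *
    rw [transpose_add, ha, hb]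
  zero_mem' := transpose_zero
  smul_mem' := fun c {x} hx => by
    simp only [Set.mem_setOf_eq] at *
    rw [transpose_smul, hx]

lemma mem_symSub {M : Matrix (Fin n) (Fin n) ℝ} : M ∈ symSub n ↔ Mᵀ = M := Iff.rfl

lemma isHermitian_of_mem {M : Matrix (Fin n) (Fin n) ℝ} (h : M ∈ symSub n) : M.IsHermitian :=
  (conjTranspose_eq_transpose_of_trivial M).trans h

lemma isHermitian_iff_mem {M : Matrix (Fin n) (Fin n) ℝ} : M.IsHermitian ↔ M ∈ symSub n := by
  constructor
  · intro h
    rw [mem_symSub, ← conjTranspose_eq_transpose_of_trivial]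
    exact h
  · exact isHermitian_of_mem

lemma posDef_iff_quad {M : Matrix (Fin n) (Fin n) ℝ} (hM : M ∈ symSub n) :
    M.PosDef ↔ ∀ v, v ≠ 0 → 0 < v ⬝ᵥ M *ᵥ v := by
  constructor
  · intro h v hv
    have := h.dotProduct_mulVec_pos hv
    rwa [star_pi] at this
  · intro h
    refine .of_dotProduct_mulVec_pos (isHermitian_of_mem hM) fun v hv => ?_
    rw [star_pi]
    exact h v hv

/-- The trace representation of a linear functional. -/
lemma trace_rep (g : Matrix (Fin n) (Fin n) ℝ →ₗ[ℝ] ℝ) (X : Matrix (Fin n) (Fin n) ℝ) :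
    ((Matrix.of fun i j => g (single j i 1)) * X).trace = g X := by
  conv_rhs => rw [matrix_eq_sum_single X]
  rw [map_sum]
  have hrhs : ∀ i : Fin n, g (∑ j, single i j (X i j))
      = ∑ j, X i j * g (single i j 1) := by
    intro i
    rw [map_sum]
    refine Finset.sum_congr rfl fun j _ => ?_
    have h1 : single i j (X i j) = X i j • single i j (1 : ℝ) := by
      rw [smul_single, smul_eq_mul, mul_one]
    rw [h1, LinearMap.map_smul, smul_eq_mul]
  simp_rw [hrhs]
  have hlhs : ((Matrix.of fun i j => g (single j i 1)) * X).trace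
      = ∑ i, ∑ j, g (single j i 1) * X j i := by
    simp [Matrix.trace, Matrix.diag, Matrix.mul_apply]
  rw [hlhs, Finset.sum_comm]
  refine Finset.sum_congr rfl fun i _ => Finset.sum_congr rfl fun j _ => mul_comm _ _

lemma transpose_stdBasisMatrix' (i j : Fin n) :
    (single i j (1 : ℝ))ᵀ = single j i 1 := by
  ext a b
  simp only [transpose_apply, single, of_apply]
  by_cases h1 : a = j <;> by_cases h2 : b = i <;> simp [h1, h2, and_comm]

lemma vecMulVec_mem (v : Fin n → ℝ) : vecMulVec v v ∈ symSub n := by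
  rw [mem_symSub]
  ext i j
  simp [vecMulVec_apply, mul_comm]

lemma vecMulVec_posSemidef (v : Fin n → ℝ) : (vecMulVec v v).PosSemidef := by
  refine .of_dotProduct_mulVec_nonneg (isHermitian_of_mem (vecMulVec_mem v)) fun x => ?_
  rw [star_pi]
  have h : vecMulVec v v *ᵥ x = (v ⬝ᵥ x) • v := by
    ext i
    show ∑ j, vecMulVec v v i j * x j = (∑ j, v j * x j) * v i
    rw [Finset.sum_mul]
    exact Finset.sum_congr rfl fun j _ => by rw [vecMulVec_apply]; ring
  rw [h, dotProduct_smul, smul_eq_mul, dotProduct_comm]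
  exact mul_self_nonneg _

lemma dot_eq_trace (W : Matrix (Fin n) (Fin n) ℝ) (v : Fin n → ℝ) :
    v ⬝ᵥ W *ᵥ v = (W * vecMulVec v v).trace := by
  show ∑ i, v i * ∑ j, W i j * v j = ∑ i, ∑ j, W i j * (v j * v i)
  simp_rw [Finset.mul_sum]
  exact Finset.sum_congr rfl fun i _ => Finset.sum_congr rfl fun j _ => by ring

lemma trace_pos_of_posDef {W X : Matrix (Fin n) (Fin n) ℝ} (hW : W.PosSemidef) (hW0 : W ≠ 0)
    (hX : X.PosDef) : 0 < (W * X).trace := by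
  obtain ⟨B, hB⟩ := psd_exists_conjTranspose_mul hW
  have hBne : B ≠ 0 := by
    rintro rfl
    apply hW0
    rw [hB]
    simp
  have h1 : (W * X).trace = (B * X * Bᴴ).trace := by
    rw [hB, Matrix.mul_assoc, trace_mul_comm]
  have hdiag : ∀ i, (B * X * Bᴴ) i i = B i ⬝ᵥ X *ᵥ B i := by
    intro i
    calc (B * X * Bᴴ) i i = ∑ k, (∑ j, B i j * X j k) * B i k := by
          simp [Matrix.mul_apply, conjTranspose_apply]
      _ = ∑ k, ∑ j, B i j * X j k * B i k := by
          simp_rw [Finset.sum_mul]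
      _ = ∑ j, ∑ k, B i j * X j k * B i k := Finset.sum_comm
      _ = ∑ j, B i j * ∑ k, X j k * B i k := by
          simp_rw [Finset.mul_sum]
          exact Finset.sum_congr rfl fun j _ => Finset.sum_congr rfl fun k _ => by ring
      _ = B i ⬝ᵥ X *ᵥ B i := rfl
  have hnonneg : ∀ i, 0 ≤ (B * X * Bᴴ) i i := by
    intro i
    rw [hdiag i]
    have := hX.posSemidef.dotProduct_mulVec_nonneg (B i)
    rwa [star_pi] at this
  obtain ⟨i0, hi0⟩ : ∃ i, B i ≠ 0 := by
    by_contra h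
    push_neg at h
    exact hBne (by ext i j; exact congrFun (h i) j)
  have hpos : 0 < (B * X * Bᴴ) i0 i0 := by
    rw [hdiag i0]
    have := hX.dotProduct_mulVec_pos hi0
    rwa [star_pi] at this
  rw [h1]
  exact Finset.sum_pos' (fun i _ => hnonneg i) ⟨i0, Finset.mem_univ i0, hpos⟩

/-- symmetrization as a linear map into the symmetric submodule -/
noncomputable def symL (n : ℕ) : Matrix (Fin n) (Fin n) ℝ →ₗ[ℝ] ↥(symSub n) where
  toFun M := ⟨(2⁻¹ : ℝ) • (M + Mᵀ), by
    rw [mem_symSub, transpose_smul, transpose_add, transpose_transpose, add_comm]⟩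
  map_add' M N := by
    apply Subtype.ext
    simp only [Submodule.coe_add, transpose_add]
    module
  map_smul' c M := by
    apply Subtype.ext
    simp only [RingHom.id_apply, SetLike.val_smul, transpose_smul]
    module

lemma symL_of_mem {M : Matrix (Fin n) (Fin n) ℝ} (h : M ∈ symSub n) :
    symL n M = ⟨M, h⟩ := by
  apply Subtype.ext
  show (2⁻¹ : ℝ) • (M + Mᵀ) = M
  rw [mem_symSub.mp h, ← two_smul ℝ M, smul_smul]
  norm_num

lemma symL_transpose (M : Matrix (Fin n) (Fin n) ℝ) : symL n Mᵀ = symL n M := by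
  apply Subtype.ext
  show (2⁻¹ : ℝ) • (Mᵀ + Mᵀᵀ) = (2⁻¹ : ℝ) • (M + Mᵀ)
  rw [transpose_transpose, add_comm]

end FacialRed

set_option maxHeartbeats 2000000 in
open FacialRed in
/-- Theorem of the alternative underlying facial reduction: for a nonempty
spectrahedron `{X ⪰ 0 : A X = b}`, exactly one of the following holds:
(i) it contains a positive definite matrix; (ii) there is a nonzero PSD
`W = A* y` with `yᵀ b = 0`. -/
theorem stmt13 {n m : ℕ} (A : Matrix (Fin n) (Fin n) ℝ →ₗ[ℝ] (Fin m → ℝ))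
    (hA : ∀ X : Matrix (Fin n) (Fin n) ℝ, A Xᵀ = A X)
    (b : Fin m → ℝ)
    (hne : ∃ X : Matrix (Fin n) (Fin n) ℝ, X.PosSemidef ∧ A X = b) :
    Xor' (∃ X : Matrix (Fin n) (Fin n) ℝ, X.PosDef ∧ A X = b)
      (∃ (y : Fin m → ℝ) (W : Matrix (Fin n) (Fin n) ℝ), W ≠ 0 ∧ W.PosSemidef ∧
        (∀ X : Matrix (Fin n) (Fin n) ℝ, X.IsHermitian →
          (W * X).trace = ∑ i, y i * A X i) ∧
        ∑ i, y i * b i = 0) := by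
  classical
  -- exclusivity
  have excl : ¬((∃ X : Matrix (Fin n) (Fin n) ℝ, X.PosDef ∧ A X = b) ∧
      (∃ (y : Fin m → ℝ) (W : Matrix (Fin n) (Fin n) ℝ), W ≠ 0 ∧ W.PosSemidef ∧
        (∀ X : Matrix (Fin n) (Fin n) ℝ, X.IsHermitian →
          (W * X).trace = ∑ i, y i * A X i) ∧ ∑ i, y i * b i = 0)) := by
    rintro ⟨⟨X, hX, hAX⟩, y, W, hW0, hWpsd, htr, hyb⟩
    have h1 : (W * X).trace = 0 := by
      rw [htr X hX.isHermitian, hAX]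
      exact hyb
    have h2 := trace_pos_of_posDef hWpsd hW0 hX
    rw [h1] at h2
    exact lt_irrefl 0 h2
  by_cases hi : ∃ X : Matrix (Fin n) (Fin n) ℝ, X.PosDef ∧ A X = b
  · exact Or.inl ⟨hi, fun hii => excl ⟨hi, hii⟩⟩
  refine Or.inr ⟨?_, fun hi' => hi hi'⟩
  -- now construct the certificate
  rcases Nat.eq_zero_or_pos n with hn | hn
  · -- n = 0 : (i) holds, contradiction
    exfalso
    subst hn
    obtain ⟨X₀, hX₀psd, hAX₀⟩ := hne
    refine hi ⟨X₀, ⟨hX₀psd.1, fun x hx => absurd (Subsingleton.elim x 0) hx⟩, hAX₀⟩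
  obtain ⟨X₀, hX₀psd, hAX₀⟩ := hne
  have hX₀mem : X₀ ∈ symSub n := isHermitian_iff_mem.mp hX₀psd.1
  set E := symSub n with hE
  set s : Set ↥E := Subtype.val ⁻¹'
    {M : Matrix (Fin n) (Fin n) ℝ | ∀ v, v ≠ 0 → 0 < v ⬝ᵥ M *ᵥ v} with hs_def
  set t : Set ↥E := {X : ↥E | A (X : Matrix (Fin n) (Fin n) ℝ) = b} with ht_def
  have hsopen : IsOpen s := (isOpen_posdefset hn).preimage continuous_subtype_val
  have hsconv : Convex ℝ s := by
    intro X hX Y hY a c ha hc hac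
    intro v hv
    have hXv := hX v hv
    have hYv : 0 ≤ v ⬝ᵥ (Y : Matrix (Fin n) (Fin n) ℝ) *ᵥ v := le_of_lt (hY v hv)
    have hcoe : ((a • X + c • Y : ↥E) : Matrix (Fin n) (Fin n) ℝ)
        = a • (X : Matrix (Fin n) (Fin n) ℝ) + c • (Y : Matrix (Fin n) (Fin n) ℝ) := rfl
    rw [hcoe, add_mulVec, dotProduct_add, smul_mulVec, smul_mulVec,
      dotProduct_smul, dotProduct_smul, smul_eq_mul, smul_eq_mul]
    rcases ha.lt_or_eq with ha' | ha'
    · exact add_pos_of_pos_of_nonneg (mul_pos ha' hXv) (mul_nonneg hc hYv)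
    · rw [← ha'] at hac ⊢
      rw [zero_add] at hac
      rw [hac]
      simp only [zero_mul, one_mul, zero_add]
      exact hY v hv
  have htconv : Convex ℝ t := by
    intro X hX Y hY a c ha hc hac
    show A _ = b
    have hcoe : ((a • X + c • Y : ↥E) : Matrix (Fin n) (Fin n) ℝ)
        = a • (X : Matrix (Fin n) (Fin n) ℝ) + c • (Y : Matrix (Fin n) (Fin n) ℝ) := rfl
    rw [hcoe, map_add, LinearMap.map_smul, LinearMap.map_smul, hX, hY, ← add_smul, hac, one_smul]
  have hdisj : Disjoint s t := by
    rw [Set.disjoint_left]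
    intro X hXs hXt
    exact hi ⟨X.1, (posDef_iff_quad X.2).mpr hXs, hXt⟩
  obtain ⟨f, u, hfs, hft⟩ := geometric_hahn_banach_open hsconv hsopen htconv hdisj
  set oneE : ↥E := ⟨1, mem_symSub.mpr transpose_one⟩ with honeE
  have hone_s : ∀ c : ℝ, 0 < c → (c • oneE) ∈ s := by
    intro c hc v hv
    have hcoe : ((c • oneE : ↥E) : Matrix (Fin n) (Fin n) ℝ) = c • (1 : Matrix (Fin n) (Fin n) ℝ) := rfl
    rw [hcoe, smul_mulVec, one_mulVec, dotProduct_smul, smul_eq_mul]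
    have hvv : 0 < v ⬝ᵥ v := by
      have := Matrix.PosDef.one (n := Fin n) (R := ℝ)
      have h2 := this.dotProduct_mulVec_pos hv
      rwa [star_pi, one_mulVec] at h2
    exact mul_pos hc hvv
  have hf1 : f oneE < u := by
    have := hfs (1 • oneE) (hone_s 1 one_pos)
    rwa [one_smul] at this
  set X₀E : ↥E := ⟨X₀, hX₀mem⟩ with hX₀E
  have hX₀t : X₀E ∈ t := hAX₀
  -- f is nonpositive on PSD elements
  have hPSD : ∀ Z : ↥E, (Z : Matrix (Fin n) (Fin n) ℝ).PosSemidef → f Z ≤ 0 := by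
    intro Z hZ
    by_contra hpos
    push_neg at hpos
    set c : ℝ := (u - f oneE) / f Z with hc
    have hcpos : 0 < c := div_pos (by linarith) hpos
    have hmem : (c • Z + oneE) ∈ s := by
      intro v hv
      have hcoe : ((c • Z + oneE : ↥E) : Matrix (Fin n) (Fin n) ℝ)
          = c • (Z : Matrix (Fin n) (Fin n) ℝ) + 1 := rfl
      rw [hcoe, add_mulVec, dotProduct_add, smul_mulVec, dotProduct_smul, smul_eq_mul,
        one_mulVec]
      have h1 : 0 ≤ v ⬝ᵥ (Z : Matrix (Fin n) (Fin n) ℝ) *ᵥ v := by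
        have := hZ.dotProduct_mulVec_nonneg v
        rwa [star_pi] at this
      have hvv : 0 < v ⬝ᵥ v := by
        have := Matrix.PosDef.one (n := Fin n) (R := ℝ)
        have h2 := this.dotProduct_mulVec_pos hv
        rwa [star_pi, one_mulVec] at h2
      exact add_pos_of_nonneg_of_pos (mul_nonneg hcpos.le h1) hvv
    have := hfs _ hmem
    rw [map_add, _root_.map_smul, smul_eq_mul, hc, div_mul_cancel₀ _ (ne_of_gt hpos)] at this
    linarith
  have hfX₀le : f X₀E ≤ 0 := hPSD X₀E hX₀psd
  have huleX₀ : u ≤ f X₀E := hft X₀E hX₀t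
  have hu0 : 0 ≤ u := by
    by_contra hu
    push_neg at hu
    have hkey : ∀ c : ℝ, 0 < c → c * f oneE < u := by
      intro c hc
      have := hfs _ (hone_s c hc)
      rwa [_root_.map_smul, smul_eq_mul] at this
    rcases lt_trichotomy (f oneE) 0 with h | h | h
    · have hc : 0 < u / (2 * f oneE) := div_pos_of_neg_of_neg hu (by linarith)
      have h2 : f oneE ≠ 0 := ne_of_lt h
      have := hkey _ hc
      have heq : u / (2 * f oneE) * f oneE = u / 2 := by
        field_simp
      rw [heq] at this
      linarith
    · have := hkey 1 one_pos
      rw [h, mul_zero] at this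
      linarith
    · have := hPSD oneE Matrix.PosDef.one.posSemidef
      linarith
  have hu_eq : u = 0 := le_antisymm (le_trans huleX₀ hfX₀le) hu0
  have hfX₀ : f X₀E = 0 := le_antisymm hfX₀le (hu_eq ▸ huleX₀)
  have hf1neg : f oneE < 0 := hu_eq ▸ hf1
  -- f vanishes on the kernel directions
  have hker : ∀ Z : ↥E, A (Z : Matrix (Fin n) (Fin n) ℝ) = 0 → f Z = 0 := by
    intro Z hZ
    by_contra hne'
    have hmem : ∀ c : ℝ, (X₀E + c • Z) ∈ t := by
      intro c
      show A _ = b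
      have hcoe : ((X₀E + c • Z : ↥E) : Matrix (Fin n) (Fin n) ℝ)
          = X₀ + c • (Z : Matrix (Fin n) (Fin n) ℝ) := rfl
      rw [hcoe, map_add, LinearMap.map_smul, hAX₀, hZ, smul_zero, add_zero]
    have hineq : ∀ c : ℝ, u ≤ f X₀E + c * f Z := by
      intro c
      have := hft _ (hmem c)
      rwa [map_add, _root_.map_smul, smul_eq_mul] at this
    have h2 := hineq (-(f Z))
    rw [hfX₀, hu_eq, zero_add] at h2
    nlinarith [mul_self_pos.mpr hne']
  -- build g and W
  set g : Matrix (Fin n) (Fin n) ℝ →ₗ[ℝ] ℝ := -(f.toLinearMap.comp (symL n)) with hg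
  have hg_mem : ∀ (M : Matrix (Fin n) (Fin n) ℝ) (h : M ∈ symSub n),
      g M = -f ⟨M, h⟩ := by
    intro M h
    simp only [hg, LinearMap.neg_apply, LinearMap.comp_apply, ContinuousLinearMap.coe_coe]
    rw [symL_of_mem h]
  set W : Matrix (Fin n) (Fin n) ℝ :=
    Matrix.of fun i j => g (single j i 1) with hW
  have htrace : ∀ X : Matrix (Fin n) (Fin n) ℝ, (W * X).trace = g X := fun X => trace_rep g X
  have hWsym : Wᵀ = W := by
    ext i j
    show W j i = W i j
    show g (single i j 1) = g (single j i 1)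
    have h1 : single j i (1 : ℝ) = (single i j (1 : ℝ))ᵀ :=
      (transpose_stdBasisMatrix' i j).symm
    rw [h1]
    have := symL_transpose (n := n) (single i j (1 : ℝ))
    simp only [hg, LinearMap.neg_apply, LinearMap.comp_apply, ContinuousLinearMap.coe_coe, this]
  have hWpsd : W.PosSemidef := by
    refine .of_dotProduct_mulVec_nonneg ((conjTranspose_eq_transpose_of_trivial W).trans hWsym) fun x => ?_
    rw [star_pi, dot_eq_trace, htrace, hg_mem _ (vecMulVec_mem x)]
    have := hPSD ⟨_, vecMulVec_mem x⟩ (vecMulVec_posSemidef x)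
    linarith
  have hW0 : W ≠ 0 := by
    intro h
    have h1 := htrace 1
    rw [h, Matrix.zero_mul, trace_zero] at h1
    rw [hg_mem 1 (mem_symSub.mpr transpose_one)] at h1
    have : f oneE = 0 := by
      have : -f oneE = 0 := h1.symm
      linarith
    linarith
  -- construct y
  set φ : ↥E →ₗ[ℝ] ℝ := -f.toLinearMap with hφ
  set ψ : ↥E →ₗ[ℝ] (Fin m → ℝ) := A.comp E.subtype with hψ
  have hle : LinearMap.ker ψ ≤ LinearMap.ker φ := by
    intro Z hZ
    rw [LinearMap.mem_ker] at hZ ⊢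
    have : A (Z : Matrix (Fin n) (Fin n) ℝ) = 0 := hZ
    simp only [hφ, LinearMap.neg_apply, ContinuousLinearMap.coe_coe]
    rw [hker Z this, neg_zero]
  set q : (↥E ⧸ LinearMap.ker ψ) →ₗ[ℝ] ℝ := (LinearMap.ker ψ).liftQ φ hle with hq
  set e := ψ.quotKerEquivRange with he
  set ℓ₀ : ↥(LinearMap.range ψ) →ₗ[ℝ] ℝ := q.comp e.symm.toLinearMap with hℓ₀
  obtain ⟨ℓ, hℓ⟩ := LinearMap.exists_extend ℓ₀
  set y : Fin m → ℝ := fun i => ℓ (Pi.single i 1) with hy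
  have hmain : ∀ Z : ↥E, ℓ (A (Z : Matrix (Fin n) (Fin n) ℝ)) = -f Z := by
    intro Z
    have hmem' : A (Z : Matrix (Fin n) (Fin n) ℝ) ∈ LinearMap.range ψ := ⟨Z, rfl⟩
    have h1 : ℓ (A (Z : Matrix (Fin n) (Fin n) ℝ)) = ℓ₀ ⟨A (Z : Matrix (Fin n) (Fin n) ℝ), hmem'⟩ := by
      exact LinearMap.congr_fun hℓ ⟨A (Z : Matrix (Fin n) (Fin n) ℝ), hmem'⟩
    rw [h1]
    have h2 : e (Submodule.Quotient.mk Z) = ⟨A (Z : Matrix (Fin n) (Fin n) ℝ), hmem'⟩ := by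
      apply Subtype.ext
      exact LinearMap.quotKerEquivRange_apply_mk ψ Z
    have h3 : e.symm ⟨A (Z : Matrix (Fin n) (Fin n) ℝ), hmem'⟩ = Submodule.Quotient.mk Z := by
      rw [← h2, LinearEquiv.symm_apply_apply]
    simp only [hℓ₀, LinearMap.comp_apply, LinearEquiv.coe_toLinearMap]
    rw [h3]
    simp only [hq, Submodule.liftQ_apply, hφ, LinearMap.neg_apply, ContinuousLinearMap.coe_coe]
  have hsum : ∀ v : Fin m → ℝ, ℓ v = ∑ i, y i * v i := by
    intro v
    rw [LinearMap.pi_apply_eq_sum_univ ℓ v]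
    refine Finset.sum_congr rfl fun i _ => ?_
    have hsingle : (fun j => if i = j then (1 : ℝ) else 0) = Pi.single i 1 := by
      funext j
      rw [Pi.single_apply]
      by_cases h : i = j
      · simp [h]
      · simp [h, Ne.symm h]
    rw [hsingle, smul_eq_mul, hy, mul_comm]
  refine ⟨y, W, hW0, hWpsd, ?_, ?_⟩
  · intro X hX
    have hXmem : X ∈ symSub n := isHermitian_iff_mem.mp hX
    rw [htrace X, hg_mem X hXmem]
    have := hmain ⟨X, hXmem⟩
    rw [← this, hsum (A X)]
  · have := hmain X₀E
    rw [hfX₀, neg_zero] at this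
    have h2 : (X₀E : Matrix (Fin n) (Fin n) ℝ) = X₀ := rfl
    rw [h2, hAX₀] at this
    rw [← hsum b, this]
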